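/- Fix λ > 0 and ε ∈ (0,1), and define b_V^ε : ℝ → ℝ by b_V^ε(x) = −1/ε for 0 ≤ x ≤ ε, b_V^ε(x) = 1/ε for −ε ≤ x < 0, and b_V^ε(x) = 0 otherwise. If f : ℝ → ℝ is bounded, continuously differentiable on ℝ, twice differentiable at every point x ∉ {−ε, 0, ε}, and satisfies the homogeneous equation λ f(x) − (1/2) f''(x) − b_V^ε(x) f'(x) = 0 at every such x, then f is identically zero. -/

import Mathlib

open Filter Real Set

private lemma abs_sinh_le_cosh' (t : ℝ) : |Real.sinh t| ≤ Real.cosh t := by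
  have h1 := Real.cosh_pos t
  have h2 : Real.cosh t ^ 2 = Real.sinh t ^ 2 + 1 := Real.cosh_sq t
  nlinarith [sq_abs (Real.sinh t), abs_nonneg (Real.sinh t)]

set_option maxHeartbeats 1600000 in
private lemma resolvent_nonpos (lam : ℝ) (hlam : 0 < lam) (ε : ℝ)
    (hε : ε ∈ Set.Ioo (0:ℝ) 1)
    (bV : ℝ → ℝ)
    (hbV : ∀ x, bV x = if 0 ≤ x ∧ x ≤ ε then -1/ε
                       else if -ε ≤ x ∧ x < 0 then 1/ε else 0)
    (f : ℝ → ℝ)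
    (hbdd : ∃ M : ℝ, ∀ x, |f x| ≤ M)
    (hf : ContDiff ℝ 1 f)
    (hf2 : ∀ x, x ∉ ({-ε, 0, ε} : Set ℝ) → DifferentiableAt ℝ (deriv f) x)
    (heq : ∀ x, x ∉ ({-ε, 0, ε} : Set ℝ) →
      lam * f x - (1/2) * deriv (deriv f) x - bV x * deriv f x = 0) :
    ∀ x, f x ≤ 0 := by
  intro x₀
  by_contra hpos
  push_neg at hpos
  obtain ⟨M, hM⟩ := hbdd
  have hε0 := hε.1
  have hε1 := hε.2
  -- choose the barrier exponent k
  obtain ⟨k, hk_def⟩ : ∃ k : ℝ, k = min (ε * lam / 2) 1 := ⟨_, rfl⟩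
  have hk : 0 < k := by rw [hk_def]; exact lt_min (by positivity) one_pos
  have hk1 : k ≤ 1 := by rw [hk_def]; exact min_le_right _ _
  have hk2 : k ≤ ε * lam / 2 := by rw [hk_def]; exact min_le_left _ _
  have hkε : k / ε ≤ lam / 2 := by
    rw [div_le_iff₀ hε0]; nlinarith
  have hc₀' : 0 < lam - k ^ 2 / 2 - k / ε := by
    have hkl : k ≤ lam / 2 := by nlinarith
    have hk21 : k ^ 2 ≤ k := by nlinarith
    linarith
  obtain ⟨c₀, hc₀def⟩ : ∃ c : ℝ, c = lam - k ^ 2 / 2 - k / ε := ⟨_, rfl⟩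
  have hc₀ : 0 < c₀ := by rw [hc₀def]; exact hc₀'
  -- the barrier
  have hcoshx₀ := Real.cosh_pos (k * x₀)
  obtain ⟨δ, hδdef⟩ : ∃ d : ℝ, d = f x₀ / (2 * Real.cosh (k * x₀)) := ⟨_, rfl⟩
  have hδ : 0 < δ := by rw [hδdef]; exact div_pos hpos (by positivity)
  set g : ℝ → ℝ := fun x => f x - δ * Real.cosh (k * x) with hgdef
  set g' : ℝ → ℝ := fun x => deriv f x - δ * k * Real.sinh (k * x) with hg'def
  have hfd : Differentiable ℝ f := hf.differentiable one_ne_zero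
  have hlin : ∀ x : ℝ, HasDerivAt (fun y : ℝ => k * y) k x := by
    intro x; simpa using (hasDerivAt_id x).const_mul k
  have hcoshd : ∀ x : ℝ, HasDerivAt (fun y => δ * Real.cosh (k * y))
      (δ * k * Real.sinh (k * x)) x := by
    intro x
    have h2 := (Real.hasDerivAt_cosh (k * x)).comp x (hlin x)
    have h3 := h2.const_mul δ
    exact h3.congr_deriv (by ring)
  have hsinhd : ∀ x : ℝ, HasDerivAt (fun y => δ * k * Real.sinh (k * y))
      (δ * k * (k * Real.cosh (k * x))) x := by
    intro x
    have h2 := (Real.hasDerivAt_sinh (k * x)).comp x (hlin x)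
    have h3 := h2.const_mul (δ * k)
    exact h3.congr_deriv (by ring)
  have hg'at : ∀ x, HasDerivAt g (g' x) x := fun x =>
    (hfd x).hasDerivAt.sub (hcoshd x)
  have hgd : Differentiable ℝ g := fun x => (hg'at x).differentiableAt
  have hderivg : deriv g = g' := funext fun x => (hg'at x).deriv
  have hcontf' : Continuous (deriv f) := hf.continuous_deriv le_rfl
  have hcontg : Continuous g := by
    apply hf.continuous.sub
    exact continuous_const.mul (Real.continuous_cosh.comp (continuous_const.mul continuous_id))
  have hcontg' : Continuous g' := by
    apply hcontf'.sub
    exact continuous_const.mul (Real.continuous_sinh.comp (continuous_const.mul continuous_id))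
  -- g tends to -∞ away from compacts
  have hcosh_top : Tendsto Real.cosh atTop atTop := by
    apply tendsto_atTop_mono (fun x => ?_) (Real.tendsto_exp_atTop.atTop_div_const two_pos)
    rw [Real.cosh_eq]
    have := Real.exp_pos (-x)
    linarith
  have ht1 : Tendsto (fun x : ℝ => δ * Real.cosh (k * x)) atTop atTop :=
    (hcosh_top.comp (tendsto_id.const_mul_atTop hk)).const_mul_atTop hδ
  have ht2 : Tendsto (fun x : ℝ => δ * Real.cosh (k * x)) atBot atTop := by
    have hcomp : Tendsto (fun x : ℝ => k * x) atBot atBot := tendsto_id.const_mul_atBot hk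
    have hc : Tendsto (fun x : ℝ => Real.cosh (k * x)) atBot atTop := by
      have heven : ∀ x : ℝ, Real.cosh (k * x) = Real.cosh (-(k * x)) := fun x =>
        (Real.cosh_neg _).symm
      simp only [heven]
      exact hcosh_top.comp (tendsto_neg_atBot_atTop.comp hcomp)
    exact hc.const_mul_atTop hδ
  have hbotaux : ∀ l : Filter ℝ, Tendsto (fun x : ℝ => δ * Real.cosh (k * x)) l atTop →
      Tendsto g l atBot := by
    intro l hl
    apply tendsto_atBot_mono
      (fun x => (show g x ≤ M - δ * Real.cosh (k * x) from
        sub_le_sub ((abs_le.mp (hM x)).2) le_rfl))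
    have h1 := tendsto_neg_atTop_atBot.comp hl
    have h2 := tendsto_atBot_add_const_left l M h1
    simpa [sub_eq_add_neg, Function.comp] using h2
  have hgbot : Tendsto g (cocompact ℝ) atBot := by
    rw [cocompact_eq_atBot_atTop, tendsto_sup]
    exact ⟨hbotaux _ ht2, hbotaux _ ht1⟩
  -- global max of g
  obtain ⟨xs, hxs⟩ := hcontg.exists_forall_ge hgbot
  have hgx₀pos : 0 < g x₀ := by
    have hx : g x₀ = f x₀ / 2 := by
      rw [hgdef]
      simp only
      rw [hδdef]
      field_simp
      ring
    rw [hx]; linarith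
  have hgxs : 0 < g xs := lt_of_lt_of_le hgx₀pos (hxs x₀)
  have hloc : IsLocalMax g xs := Filter.Eventually.of_forall hxs
  have hg'xs : g' xs = 0 := by
    rw [← hderivg]
    exact hloc.deriv_eq_zero
  -- constant drift on a right-neighborhood of xs
  obtain ⟨r, hr, b₀, hb₀abs, hreg⟩ :
      ∃ r > 0, ∃ b₀ : ℝ, |b₀| ≤ 1/ε ∧
        ∀ y ∈ Set.Ioo xs (xs + r), bV y = b₀ ∧ y ∉ ({-ε, 0, ε} : Set ℝ) := by
    have h1ε : (0:ℝ) < 1/ε := by positivity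
    rcases lt_or_ge xs (-ε) with hc1 | hc1
    · refine ⟨-ε - xs, by linarith, 0, by rw [abs_zero]; positivity, ?_⟩
      intro y hy
      have hy1 : xs < y := hy.1
      have hy2 : y < -ε := by have := hy.2; linarith
      refine ⟨?_, ?_⟩
      · rw [hbV y, if_neg, if_neg]
        · rintro ⟨h, -⟩; linarith
        · rintro ⟨h, -⟩; linarith
      · intro hmem
        simp only [Set.mem_insert_iff, Set.mem_singleton_iff] at hmem
        rcases hmem with h | h | h <;> linarith
    rcases lt_or_ge xs 0 with hc2 | hc2
    · refine ⟨-xs, by linarith, 1/ε, le_of_eq (abs_of_pos h1ε), ?_⟩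
      intro y hy
      have hy1 : xs < y := hy.1
      have hy2 : y < 0 := by have := hy.2; linarith
      refine ⟨?_, ?_⟩
      · rw [hbV y, if_neg, if_pos ⟨by linarith, hy2⟩]
        rintro ⟨h, -⟩; linarith
      · intro hmem
        simp only [Set.mem_insert_iff, Set.mem_singleton_iff] at hmem
        rcases hmem with h | h | h <;> linarith
    rcases lt_or_ge xs ε with hc3 | hc3
    · refine ⟨ε - xs, by linarith, -1/ε, ?_, ?_⟩
      · rw [abs_div, abs_neg, abs_one, abs_of_pos hε0]
      intro y hy
      have hy1 : xs < y := hy.1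
      have hy2 : y < ε := by have := hy.2; linarith
      refine ⟨?_, ?_⟩
      · rw [hbV y, if_pos ⟨by linarith, le_of_lt hy2⟩]
      · intro hmem
        simp only [Set.mem_insert_iff, Set.mem_singleton_iff] at hmem
        rcases hmem with h | h | h <;> linarith
    · refine ⟨1, one_pos, 0, by rw [abs_zero]; positivity, ?_⟩
      intro y hy
      have hy1 : xs < y := hy.1
      have hyε : ε < y := lt_of_le_of_lt hc3 hy1
      refine ⟨?_, ?_⟩
      · rw [hbV y, if_neg, if_neg]
        · rintro ⟨-, h⟩; linarith
        · rintro ⟨-, h⟩; linarith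
      · intro hmem
        simp only [Set.mem_insert_iff, Set.mem_singleton_iff] at hmem
        rcases hmem with h | h | h <;> linarith
  -- the comparison function Ψ is positive near xs
  set Ψ : ℝ → ℝ := fun z => 2 * lam * g z - 2 * b₀ * g' z + 2 * δ * c₀ with hΨdef
  have hΨcont : Continuous Ψ := by
    apply Continuous.add
    · exact (continuous_const.mul hcontg).sub (continuous_const.mul hcontg')
    · exact continuous_const
  have hΨxs : 0 < Ψ xs := by
    rw [hΨdef]
    simp only [hg'xs]
    nlinarith [mul_pos hlam hgxs, mul_pos hδ hc₀]
  obtain ⟨r', hr', hball⟩ := Metric.continuousAt_iff.mp hΨcont.continuousAt (Ψ xs) hΨxs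
  have hΨpos : ∀ z : ℝ, dist z xs < r' → 0 < Ψ z := by
    intro z hz
    have := hball hz
    rw [Real.dist_eq, abs_lt] at this
    linarith [this.1]
  -- pick the step h
  obtain ⟨h, hhdef⟩ : ∃ h : ℝ, h = min r r' / 2 := ⟨_, rfl⟩
  have hmin : 0 < min r r' := lt_min hr hr'
  have hh : 0 < h := by rw [hhdef]; positivity
  have hhr : h < r := by
    rw [hhdef]; have := min_le_left r r'; linarith
  have hhr' : h < r' := by
    rw [hhdef]; have := min_le_right r r'; linarith
  -- first mean value theorem: a point y with g' y ≤ 0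
  have hx_lt : xs < xs + h := by linarith
  obtain ⟨y, hy, hyslope⟩ := exists_deriv_eq_slope g hx_lt hcontg.continuousOn
    hgd.differentiableOn
  have hg'y : g' y ≤ 0 := by
    rw [← hderivg, hyslope]
    apply div_nonpos_of_nonpos_of_nonneg
    · linarith [hxs (xs + h)]
    · linarith
  -- second mean value theorem: a point z with (g')' z ≤ 0
  have hy1 : xs < y := hy.1
  have hy2 : y < xs + h := hy.2
  have hyIoo : ∀ w : ℝ, w ∈ Set.Ioo xs y → w ∈ Set.Ioo xs (xs + r) := by
    intro w hw
    exact ⟨hw.1, by linarith [hw.2]⟩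
  obtain ⟨z, hz, hzslope⟩ := exists_deriv_eq_slope g' hy1 hcontg'.continuousOn
    (fun w hw => by
      have hwbad := (hreg w (hyIoo w hw)).2
      exact ((hf2 w hwbad).sub (hsinhd w).differentiableAt).differentiableWithinAt)
  have hzIoo : z ∈ Set.Ioo xs (xs + r) := hyIoo z hz
  have hzbad : z ∉ ({-ε, 0, ε} : Set ℝ) := (hreg z hzIoo).2
  have hbz : bV z = b₀ := (hreg z hzIoo).1
  -- deriv g' z ≤ 0
  have hdg'z : deriv g' z ≤ 0 := by
    rw [hzslope, hg'xs]
    apply div_nonpos_of_nonpos_of_nonneg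
    · linarith
    · linarith [hz.1]
  -- compute deriv g' z
  have hD2 : HasDerivAt g' (deriv (deriv f) z - δ * k * (k * Real.cosh (k * z))) z :=
    (hf2 z hzbad).hasDerivAt.sub (hsinhd z)
  have hdg'z_eq : deriv g' z = deriv (deriv f) z - δ * k ^ 2 * Real.cosh (k * z) := by
    rw [hD2.deriv]; ring
  -- the equation at z
  have heqz := heq z hzbad
  rw [hbz] at heqz
  have hf''z : deriv (deriv f) z = 2 * lam * f z - 2 * b₀ * deriv f z := by linarith
  -- put everything together
  have hC1 : 1 ≤ Real.cosh (k * z) := Real.one_le_cosh _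
  have hbS : b₀ * Real.sinh (k * z) ≤ 1/ε * Real.cosh (k * z) := by
    calc b₀ * Real.sinh (k * z) ≤ |b₀ * Real.sinh (k * z)| := le_abs_self _
    _ = |b₀| * |Real.sinh (k * z)| := abs_mul _ _
    _ ≤ 1/ε * Real.cosh (k * z) := by
        apply mul_le_mul hb₀abs (abs_sinh_le_cosh' _) (abs_nonneg _)
        positivity
  have h1 : 2 * lam * f z - 2 * b₀ * deriv f z - δ * k ^ 2 * Real.cosh (k * z) ≤ 0 := by
    rw [← hf''z]
    rw [hdg'z_eq] at hdg'z
    linarith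
  have hzdist : dist z xs < r' := by
    rw [Real.dist_eq, abs_of_pos (by linarith [hz.1] : (0:ℝ) < z - xs)]
    linarith [hz.2, hy2]
  have h2 := hΨpos z hzdist
  rw [hΨdef] at h2
  simp only [hgdef, hg'def] at h2
  rw [hc₀def, div_eq_mul_one_div k ε] at h2
  -- h2 : 0 < 2*lam*(f z - δ*cosh) - 2*b₀*(deriv f z - δ*k*sinh) + 2*δ*(lam - k^2/2 - k/ε)
  have hδk : (0:ℝ) ≤ 2 * δ * k := by positivity
  have hprod : 0 ≤ δ * (Real.cosh (k * z) - 1) * (lam - k ^ 2 / 2 - k * (1/ε)) := by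
    rw [← div_eq_mul_one_div k ε]
    exact mul_nonneg (mul_nonneg hδ.le (by linarith)) hc₀'.le
  have hbSk : 2 * δ * k * (b₀ * Real.sinh (k * z)) ≤
      2 * δ * k * (1/ε * Real.cosh (k * z)) :=
    mul_le_mul_of_nonneg_left hbS hδk
  linarith [h1, h2, hbSk, hprod]

/-- **Uniqueness for the resolvent equation of the comparison diffusion.**
For `λ > 0`, `ε ∈ (0,1)` and the drift `b_V^ε`, any bounded `C¹` function
`f`, twice differentiable away from `{-ε, 0, ε}` and solving the homogeneous
equation `λ f - (1/2) f'' - b_V^ε f' = 0` there, vanishes identically. -/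
theorem stmt_8 (lam : ℝ) (hlam : 0 < lam) (ε : ℝ) (hε : ε ∈ Set.Ioo (0:ℝ) 1)
    (bV : ℝ → ℝ)
    (hbV : ∀ x, bV x = if 0 ≤ x ∧ x ≤ ε then -1/ε
                       else if -ε ≤ x ∧ x < 0 then 1/ε else 0)
    (f : ℝ → ℝ)
    (hbdd : ∃ M : ℝ, ∀ x, |f x| ≤ M)
    (hf : ContDiff ℝ 1 f)
    (hf2 : ∀ x, x ∉ ({-ε, 0, ε} : Set ℝ) → DifferentiableAt ℝ (deriv f) x)
    (heq : ∀ x, x ∉ ({-ε, 0, ε} : Set ℝ) →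
      lam * f x - (1/2) * deriv (deriv f) x - bV x * deriv f x = 0) :
    ∀ x, f x = 0 := by
  intro x
  have h1 := resolvent_nonpos lam hlam ε hε bV hbV f hbdd hf hf2 heq x
  obtain ⟨M, hM⟩ := hbdd
  have hnegd : deriv (fun y => -f y) = fun y => -deriv f y := funext fun y => deriv.neg
  have h2 := resolvent_nonpos lam hlam ε hε bV hbV (fun y => -f y)
    ⟨M, fun y => by rw [abs_neg]; exact hM y⟩
    hf.neg
    (fun y hy => by rw [hnegd]; exact (hf2 y hy).neg)
    (fun y hy => by
      have e1 : deriv (deriv fun y => -f y) y = -deriv (deriv f) y := by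
        rw [hnegd]; exact deriv.neg
      have e2 : deriv (fun y => -f y) y = -deriv f y := deriv.neg
      have h3 := heq y hy
      simp only [e1, e2]
      linarith)
    x
  have h2' : -f x ≤ 0 := h2
  linarith
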